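/- Let d^{AD}_n be the number of signed derangements in D_n of even type-D length. Then d^{AD}_1 = 0, d^{AD}_2 = 1, and for all n ≥ 3, d^{AD}_n = (2n-1)·d^{AD}_{n-1} + 2(n-1)·d^{AD}_{n-2} + (-1)^{n-1}(2n-3). -/

import Mathlib

open Finset

/-- `w : Fin n → ℤ` is a signed permutation of `{1,…,n}`: the absolute values of its
entries form a permutation of `{1,…,n}`. -/
def isSignedPerm (n : ℕ) (w : Fin n → ℤ) : Prop :=
  (∀ i, 1 ≤ (w i).natAbs ∧ (w i).natAbs ≤ n) ∧
    Function.Injective fun i => (w i).natAbs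

/-- The inversion number of the word `w`, with respect to the usual order on `ℤ`. -/
def invW (n : ℕ) (w : Fin n → ℤ) : ℕ :=
  ((Finset.univ : Finset (Fin n × Fin n)).filter fun p => p.1 < p.2 ∧ w p.2 < w p.1).card

/-- The type-`B` length: `ℓ_B(w) = inv(w) - ∑_{i : w_i < 0} w_i`. -/
def lenB (n : ℕ) (w : Fin n → ℤ) : ℤ :=
  (invW n w : ℤ) - ∑ i ∈ Finset.univ.filter (fun i : Fin n => w i < 0), w i

/-- `w` is a signed derangement: no entry satisfies `w_i = i` (in 1-indexed notation). -/
def isDerang (n : ℕ) (w : Fin n → ℤ) : Prop :=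
  ∀ i : Fin n, w i ≠ ((i : ℕ) : ℤ) + 1

/-- The number of negative entries of `w`. -/
def negCount (n : ℕ) (w : Fin n → ℤ) : ℕ :=
  (Finset.univ.filter fun i : Fin n => w i < 0).card

/-- The type-`D` length: `ℓ_D(w) = inv(w) - ∑_{i : w_i < 0} (w_i + 1)`. -/
def lenD (n : ℕ) (w : Fin n → ℤ) : ℤ :=
  (invW n w : ℤ) - ∑ i ∈ Finset.univ.filter (fun i : Fin n => w i < 0), (w i + 1)

/-- The number of signed derangements in the even-signed permutation group `D_n`
(signed permutations with an even number of negative entries) whose type-`D` length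
is even. -/
noncomputable def dAD (n : ℕ) : ℕ :=
  Set.ncard {w : Fin n → ℤ |
    isSignedPerm n w ∧ Even (negCount n w) ∧ isDerang n w ∧ Even (lenD n w)}

open Equiv


/-- inversions of the absolute-value word -/
def invB (n : ℕ) (w : Fin n → ℤ) : ℕ :=
  ((Finset.univ : Finset (Fin n × Fin n)).filter
    fun p => p.1 < p.2 ∧ (w p.2).natAbs < (w p.1).natAbs).card

section parity
variable {n : ℕ} {w : Fin n → ℤ}

lemma key_case (hw : isSignedPerm n w) {i j : Fin n} (hij : i ≠ j) :
    (¬(w j < w i ↔ (w j).natAbs < (w i).natAbs)) ↔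
      ((w i < 0 ∧ (w j).natAbs < (w i).natAbs) ∨ (w j < 0 ∧ (w i).natAbs < (w j).natAbs)) := by
  have h1 : 1 ≤ (w i).natAbs := (hw.1 i).1
  have h2 : 1 ≤ (w j).natAbs := (hw.1 j).1
  have hne : (w i).natAbs ≠ (w j).natAbs := fun h => hij (hw.2 h)
  have e1 : ((w i).natAbs : ℤ) = |w i| := (Int.abs_eq_natAbs _).symm
  have e2 : ((w j).natAbs : ℤ) = |w j| := (Int.abs_eq_natAbs _).symm
  rw [show ((w j).natAbs < (w i).natAbs ↔ (((w j).natAbs : ℤ) < ((w i).natAbs : ℤ))) from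
    (Nat.cast_lt).symm, show ((w i).natAbs < (w j).natAbs ↔ (((w i).natAbs : ℤ) < ((w j).natAbs : ℤ))) from (Nat.cast_lt).symm]
  have hne' : ((w i).natAbs : ℤ) ≠ ((w j).natAbs : ℤ) := by exact_mod_cast hne
  have h1' : (1:ℤ) ≤ ((w i).natAbs : ℤ) := by exact_mod_cast h1
  rw [e1, e2] at *
  rcases abs_cases (w i) with ⟨a1, a2⟩ | ⟨a1, a2⟩ <;>
    rcases abs_cases (w j) with ⟨b1, b2⟩ | ⟨b1, b2⟩ <;>
    rw [a1, b1] at * <;> omega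

/-- the set of "discrepancy" pairs, unordered-pair version -/
lemma card_D_eq_E (hw : isSignedPerm n w) :
    ((Finset.univ : Finset (Fin n × Fin n)).filter
        fun p => p.1 < p.2 ∧ ¬(w p.2 < w p.1 ↔ (w p.2).natAbs < (w p.1).natAbs)).card
    = ((Finset.univ : Finset (Fin n × Fin n)).filter
        fun q => w q.1 < 0 ∧ (w q.2).natAbs < (w q.1).natAbs).card := by
  apply Finset.card_nbij'
    (i := fun p => if (w p.2).natAbs < (w p.1).natAbs then p else (p.2, p.1))
    (j := fun q => if q.1 < q.2 then q else (q.2, q.1))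
  · rintro ⟨a, b⟩ hp
    simp only [Finset.mem_coe, Finset.mem_filter, Finset.mem_univ, true_and] at hp ⊢
    obtain ⟨hab, hd⟩ := hp
    rcases (key_case hw (ne_of_lt hab)).mp hd with ⟨hneg, hlt⟩ | ⟨hneg, hlt⟩
    · rw [if_pos hlt]; exact ⟨hneg, hlt⟩
    · rw [if_neg (by omega)]; exact ⟨hneg, hlt⟩
  · rintro ⟨a, b⟩ hq
    simp only [Finset.mem_coe, Finset.mem_filter, Finset.mem_univ, true_and] at hq ⊢
    obtain ⟨hneg, hlt⟩ := hq
    have hne : a ≠ b := by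
      intro h; subst h; omega
    rcases lt_or_gt_of_ne hne with h | h
    · rw [if_pos h]
      exact ⟨h, (key_case hw (ne_of_lt h)).mpr (Or.inl ⟨hneg, hlt⟩)⟩
    · rw [if_neg (by omega)]
      refine ⟨h, (key_case hw (ne_of_gt h).symm).mpr (Or.inr ⟨hneg, hlt⟩)⟩
  · rintro ⟨a, b⟩ hp
    simp only [Finset.mem_coe, Finset.mem_filter, Finset.mem_univ, true_and] at hp
    obtain ⟨hab, _⟩ := hp
    dsimp only
    by_cases h : (w b).natAbs < (w a).natAbs
    · rw [if_pos h, if_pos hab]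
    · rw [if_neg h]
      rw [if_neg (show ¬ b < a by omega)]
  · rintro ⟨a, b⟩ hq
    simp only [Finset.mem_coe, Finset.mem_filter, Finset.mem_univ, true_and] at hq
    obtain ⟨hneg, hlt⟩ := hq
    have hne : a ≠ b := by intro h; subst h; omega
    dsimp only
    by_cases h : a < b
    · rw [if_pos h, if_pos hlt]
    · rw [if_neg h]
      rw [if_neg (show ¬ (w a).natAbs < (w b).natAbs by omega)]

lemma count_lt (hw : isSignedPerm n w) {m : ℕ} (hm1 : 1 ≤ m) (hmn : m ≤ n) :
    ((Finset.univ : Finset (Fin n)).filter fun j => (w j).natAbs < m).card = m - 1 := by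
  have hinj : Function.Injective fun i => (w i).natAbs := hw.2
  have himg : (Finset.univ : Finset (Fin n)).image (fun j => (w j).natAbs) = Finset.Icc 1 n := by
    apply Finset.eq_of_subset_of_card_le
    · intro x hx
      simp only [Finset.mem_image] at hx
      obtain ⟨j, _, rfl⟩ := hx
      exact Finset.mem_Icc.mpr ⟨(hw.1 j).1, (hw.1 j).2⟩
    · rw [Finset.card_image_of_injective _ hinj]
      simp [Nat.card_Icc]
  have h2 : ((Finset.univ : Finset (Fin n)).filter fun j => (w j).natAbs < m).card
      = (((Finset.univ : Finset (Fin n)).image (fun j => (w j).natAbs)).filter (· < m)).card := by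
    rw [Finset.filter_image, Finset.card_image_of_injective _ hinj]
  rw [h2, himg]
  rw [show (Finset.Icc 1 n).filter (· < m) = Finset.Icc 1 (m - 1) by
    ext x; simp only [Finset.mem_filter, Finset.mem_Icc]; omega]
  simp [Nat.card_Icc]

lemma card_E_eq_sum (hw : isSignedPerm n w) :
    ((Finset.univ : Finset (Fin n × Fin n)).filter
        fun q => w q.1 < 0 ∧ (w q.2).natAbs < (w q.1).natAbs).card
    = ∑ i ∈ Finset.univ.filter (fun i : Fin n => w i < 0), ((w i).natAbs - 1) := by
  rw [Finset.card_filter]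
  rw [Fintype.sum_prod_type]
  rw [Finset.sum_filter]
  apply Finset.sum_congr rfl
  intro i _
  by_cases h : w i < 0
  · rw [if_pos h, ← count_lt hw (hw.1 i).1 (hw.1 i).2]
    rw [Finset.card_filter]
    apply Finset.sum_congr rfl
    intro j _
    simp [h]
  · rw [if_neg h]
    apply Finset.sum_eq_zero
    intro j _
    simp [h]

lemma even_three (n : ℕ) (w : Fin n → ℤ) :
    Even (invW n w + invB n w +
      ((Finset.univ : Finset (Fin n × Fin n)).filter
        fun p => p.1 < p.2 ∧ ¬(w p.2 < w p.1 ↔ (w p.2).natAbs < (w p.1).natAbs)).card) := by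
  unfold invW invB
  rw [Finset.card_filter, Finset.card_filter, Finset.card_filter, ← Finset.sum_add_distrib,
    ← Finset.sum_add_distrib]
  apply Finset.even_sum
  intro p _
  by_cases h1 : p.1 < p.2 <;> by_cases h2 : w p.2 < w p.1 <;>
    by_cases h3 : (w p.2).natAbs < (w p.1).natAbs <;>
    simp [h1, h2, h3]

lemma lenD_eq_cast (hw : isSignedPerm n w) :
    lenD n w = ((invW n w + ∑ i ∈ Finset.univ.filter (fun i : Fin n => w i < 0),
      ((w i).natAbs - 1) : ℕ) : ℤ) := by
  have hsum : ∑ i ∈ Finset.univ.filter (fun i : Fin n => w i < 0), (w i + 1)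
      = - ∑ i ∈ Finset.univ.filter (fun i : Fin n => w i < 0), (((w i).natAbs - 1 : ℕ) : ℤ) := by
    rw [← Finset.sum_neg_distrib]
    apply Finset.sum_congr rfl
    intro i hi
    simp only [Finset.mem_filter] at hi
    have h1 : 1 ≤ (w i).natAbs := (hw.1 i).1
    have h2 : ((w i).natAbs : ℤ) = -(w i) := Int.ofNat_natAbs_of_nonpos (le_of_lt hi.2)
    rw [Nat.cast_sub h1, h2]; ring
  unfold lenD
  rw [hsum]
  push_cast
  ring

lemma lenD_parity (hw : isSignedPerm n w) : Even (lenD n w) ↔ Even (invB n w) := by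
  rw [lenD_eq_cast hw, Int.even_coe_nat]
  rw [← card_E_eq_sum hw, ← card_D_eq_E hw]
  have h3 := even_three n w
  simp only [Nat.even_iff] at *
  omega


/-- inversion count of a permutation of `Fin n` -/
def invP (n : ℕ) (σ : Equiv.Perm (Fin n)) : ℕ :=
  ((Finset.univ : Finset (Fin n × Fin n)).filter fun p => p.1 < p.2 ∧ σ p.2 < σ p.1).card

lemma prod_neg_one_ite {α : Type*} (s : Finset α) (p : α → Prop) [DecidablePred p] :
    (∏ x ∈ s, if p x then (-1 : ℤ) else 1) = (-1) ^ (s.filter p).card := by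
  rw [Finset.prod_ite]
  simp

lemma signAux_eq_pow (n : ℕ) (σ : Equiv.Perm (Fin n)) :
    ((Equiv.Perm.signAux σ : ℤˣ) : ℤ) = (-1) ^ invP n σ := by
  unfold Equiv.Perm.signAux
  push_cast
  rw [Finset.prod_congr rfl (fun i _ => show (((if σ i.1 ≤ σ i.2 then (-1:ℤˣ) else 1) : ℤˣ) : ℤ) = if σ i.1 ≤ σ i.2 then (-1:ℤ) else 1 by split <;> simp), prod_neg_one_ite]
  congr 1
  apply Finset.card_nbij' (fun x => (x.2, x.1)) (fun p => ⟨p.2, p.1⟩)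
  · rintro ⟨a, b⟩ hx
    simp only [Finset.mem_coe, Finset.mem_filter, Equiv.Perm.mem_finPairsLT] at hx
    simp only [Finset.mem_coe, Finset.mem_filter, Finset.mem_univ, true_and]
    exact ⟨hx.1, lt_of_le_of_ne hx.2 (fun h => absurd (σ.injective h) (ne_of_gt hx.1))⟩
  · rintro ⟨a, b⟩ hp
    simp only [Finset.mem_coe, Finset.mem_filter, Finset.mem_univ, true_and] at hp
    simp only [Finset.mem_coe, Finset.mem_filter, Equiv.Perm.mem_finPairsLT]
    exact ⟨hp.1, le_of_lt hp.2⟩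
  · rintro ⟨a, b⟩ _; rfl
  · rintro ⟨a, b⟩ _; rfl

lemma signAux_eq_one_iff (n : ℕ) (σ : Equiv.Perm (Fin n)) :
    Equiv.Perm.signAux σ = 1 ↔ Even (invP n σ) := by
  constructor
  · intro h
    have := signAux_eq_pow n σ
    rw [h] at this
    simpa using (neg_one_pow_eq_one_iff_even (by norm_num)).mp this.symm
  · intro h
    have h2 : ((Equiv.Perm.signAux σ : ℤˣ) : ℤ) = 1 := by
      rw [signAux_eq_pow n σ, h.neg_one_pow]
    exact Units.ext (by simpa using h2)

/-- the signed word associated to a pair (permutation, set of negative positions) -/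
def wOf (n : ℕ) (p : Equiv.Perm (Fin n) × Finset (Fin n)) : Fin n → ℤ :=
  fun i => if i ∈ p.2 then -(((p.1 i : ℕ) : ℤ) + 1) else ((p.1 i : ℕ) : ℤ) + 1

def goodPairs (n : ℕ) : Finset (Equiv.Perm (Fin n) × Finset (Fin n)) :=
  Finset.univ.filter fun p =>
    Equiv.Perm.signAux p.1 = 1 ∧ Even p.2.card ∧ ∀ i, p.1 i = i → i ∈ p.2

section bij
variable {n : ℕ}

lemma wOf_natAbs (p : Equiv.Perm (Fin n) × Finset (Fin n)) (i : Fin n) :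
    ((wOf n p i).natAbs) = (p.1 i : ℕ) + 1 := by
  unfold wOf
  split
  · rw [Int.natAbs_neg]
    omega
  · omega

lemma wOf_neg_iff (p : Equiv.Perm (Fin n) × Finset (Fin n)) (i : Fin n) :
    wOf n p i < 0 ↔ i ∈ p.2 := by
  unfold wOf
  split
  case isTrue hmem => exact ⟨fun _ => hmem, fun _ => by omega⟩
  case isFalse hmem => exact ⟨fun h => by omega, fun h => absurd h hmem⟩

lemma wOf_signedPerm (p : Equiv.Perm (Fin n) × Finset (Fin n)) :
    isSignedPerm n (wOf n p) := by
  constructor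
  · intro i
    rw [wOf_natAbs]
    have := (p.1 i).isLt
    omega
  · intro i j h
    simp only [wOf_natAbs] at h
    have : p.1 i = p.1 j := Fin.ext (by omega)
    exact p.1.injective this

lemma wOf_negset (p : Equiv.Perm (Fin n) × Finset (Fin n)) :
    Finset.univ.filter (fun i => wOf n p i < 0) = p.2 := by
  ext i
  simp [wOf_neg_iff]

lemma wOf_invB (p : Equiv.Perm (Fin n) × Finset (Fin n)) :
    invB n (wOf n p) = invP n p.1 := by
  unfold invB invP
  congr 1
  apply Finset.filter_congr
  intro q _
  simp only [wOf_natAbs, Fin.lt_iff_val_lt_val]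
  constructor
  · rintro ⟨h1, h2⟩; exact ⟨h1, by omega⟩
  · rintro ⟨h1, h2⟩; exact ⟨h1, by omega⟩

lemma wOf_derang_iff (p : Equiv.Perm (Fin n) × Finset (Fin n)) :
    isDerang n (wOf n p) ↔ ∀ i, p.1 i = i → i ∈ p.2 := by
  constructor
  · intro hd i hfix
    by_contra hmem
    have : wOf n p i = ((i : ℕ) : ℤ) + 1 := by
      unfold wOf
      rw [if_neg hmem, hfix]
    exact hd i this
  · intro hfix i
    by_cases hmem : i ∈ p.2
    · have : wOf n p i < 0 := (wOf_neg_iff p i).mpr hmem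
      intro h; omega
    · unfold wOf
      rw [if_neg hmem]
      intro h
      have : p.1 i = i := Fin.ext (by exact_mod_cast (by omega : ((p.1 i : ℕ) : ℤ) = (i : ℕ)))
      exact hmem (hfix i this)

lemma wOf_injective : Function.Injective (wOf n) := by
  rintro ⟨σ, S⟩ ⟨τ, T⟩ h
  have hST : S = T := by
    ext i
    rw [← wOf_neg_iff (σ, S) i, ← wOf_neg_iff (τ, T) i, h]
  have hστ : σ = τ := by
    apply Equiv.ext
    intro i
    have hfi := congrFun h i
    have key : (σ i : ℕ) + 1 = (τ i : ℕ) + 1 := by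
      rw [← wOf_natAbs (σ, S) i, ← wOf_natAbs (τ, T) i, hfi]
    exact Fin.ext (by omega)
  rw [hST, hστ]

lemma mem_goodPairs_iff (p : Equiv.Perm (Fin n) × Finset (Fin n)) :
    p ∈ goodPairs n ↔ (isSignedPerm n (wOf n p) ∧ Even (negCount n (wOf n p)) ∧
      isDerang n (wOf n p) ∧ Even (lenD n (wOf n p))) := by
  unfold goodPairs
  rw [Finset.mem_filter]
  have hsp := wOf_signedPerm p
  constructor
  · rintro ⟨-, h1, h2, h3⟩
    refine ⟨hsp, ?_, (wOf_derang_iff p).mpr h3, ?_⟩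
    · unfold negCount; rw [wOf_negset]; exact h2
    · rw [lenD_parity hsp, wOf_invB]
      exact (signAux_eq_one_iff n p.1).mp h1
  · rintro ⟨-, h2, h3, h4⟩
    refine ⟨Finset.mem_univ _, ?_, ?_, (wOf_derang_iff p).mp h3⟩
    · apply (signAux_eq_one_iff n p.1).mpr
      rw [← wOf_invB p, ← lenD_parity hsp]
      exact h4
    · unfold negCount at h2; rw [wOf_negset] at h2; exact h2

lemma surj_on_derang (w : Fin n → ℤ) (hw : isSignedPerm n w) :
    ∃ p : Equiv.Perm (Fin n) × Finset (Fin n), wOf n p = w := by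
  have hb : ∀ i, (w i).natAbs - 1 < n := by
    intro i; have := (hw.1 i); omega
  set e : Fin n → Fin n := fun i => ⟨(w i).natAbs - 1, hb i⟩ with he
  have hinj : Function.Injective e := by
    intro i j hij
    apply hw.2
    have h1 := (hw.1 i).1
    have h2 := (hw.1 j).1
    have h3 : (w i).natAbs - 1 = (w j).natAbs - 1 := congrArg Fin.val hij
    show (w i).natAbs = (w j).natAbs
    omega
  let σ : Equiv.Perm (Fin n) := Equiv.ofBijective e (Finite.injective_iff_bijective.mp hinj)
  refine ⟨(σ, Finset.univ.filter fun i => w i < 0), ?_⟩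
  funext i
  have hσ : (σ i : ℕ) = (w i).natAbs - 1 := rfl
  have h1 := (hw.1 i).1
  unfold wOf
  simp only
  by_cases hneg : w i < 0
  · rw [if_pos (by simp [hneg])]
    have h2 : ((w i).natAbs : ℤ) = -(w i) := Int.ofNat_natAbs_of_nonpos (le_of_lt hneg)
    have h4 : ((σ i : ℕ) : ℤ) = ((w i).natAbs : ℤ) - 1 := by rw [hσ]; omega
    omega
  · rw [if_neg (by simp [hneg])]
    have h2 : ((w i).natAbs : ℤ) = w i := Int.natAbs_of_nonneg (by omega)
    have h4 : ((σ i : ℕ) : ℤ) = ((w i).natAbs : ℤ) - 1 := by rw [hσ]; omega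
    omega

lemma dAD_eq_card (n : ℕ) : dAD n = (goodPairs n).card := by
  have hset : {w : Fin n → ℤ |
      isSignedPerm n w ∧ Even (negCount n w) ∧ isDerang n w ∧ Even (lenD n w)}
      = wOf n '' ↑(goodPairs n) := by
    ext w
    constructor
    · rintro ⟨hsp, h2, h3, h4⟩
      obtain ⟨p, rfl⟩ := surj_on_derang w hsp
      exact ⟨p, (mem_goodPairs_iff p).mpr ⟨hsp, h2, h3, h4⟩, rfl⟩
    · rintro ⟨p, hp, rfl⟩
      exact (mem_goodPairs_iff p).mp hp
  unfold dAD
  rw [hset, Set.ncard_image_of_injOn (Set.injOn_of_injective wOf_injective),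
    Set.ncard_coe_finset]


def Rf : ℕ → ℤ := fun n => ∑ j ∈ Finset.range (n+1), (-2)^j * (n.descFactorial j : ℤ)

lemma Rf_zero : Rf 0 = 1 := by simp [Rf]

lemma Rf_succ (n : ℕ) : Rf (n+1) = 1 - (2*(n:ℤ)+2) * Rf n := by
  unfold Rf
  rw [Finset.sum_range_succ' (fun j => (-2)^j * (((n+1).descFactorial j : ℕ) : ℤ))]
  have hterm : ∀ k, (-2:ℤ)^(k+1) * (((n+1).descFactorial (k+1) : ℕ) : ℤ)
      = (-2*((n:ℤ)+1)) * ((-2)^k * ((n.descFactorial k : ℕ) : ℤ)) := by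
    intro k
    rw [Nat.succ_descFactorial_succ]
    push_cast
    ring
  rw [Finset.sum_congr rfl (fun k _ => hterm k), ← Finset.mul_sum]
  simp only [Nat.descFactorial_zero, pow_zero, Nat.cast_one, mul_one]
  ring

/-- value of the sign as integer -/
def sval {n : ℕ} (σ : Equiv.Perm (Fin n)) : ℤ := ((Equiv.Perm.signAux σ : ℤˣ) : ℤ)

lemma card_fixing (n : ℕ) (T : Finset (Fin n)) :
    (Finset.univ.filter fun σ : Equiv.Perm (Fin n) => ∀ i ∈ T, σ i = i).card
      = Nat.factorial (n - T.card) := by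
  rw [← Fintype.card_subtype]
  have e1 : {σ : Equiv.Perm (Fin n) // ∀ i ∈ T, σ i = i}
      ≃ {f : Equiv.Perm (Fin n) // ∀ a, ¬(a ∉ T) → f a = a} :=
    Equiv.subtypeEquivRight (fun f =>
      ⟨fun h a ha => h a (not_not.mp ha), fun h i hi => h i (not_not_intro hi)⟩)
  have e2 : Equiv.Perm {x : Fin n // x ∉ T}
      ≃ {f : Equiv.Perm (Fin n) // ∀ a, ¬(a ∉ T) → f a = a} :=
    Equiv.Perm.subtypeEquivSubtypePerm (fun x => x ∉ T)
  rw [Fintype.card_congr (e1.trans e2.symm), Fintype.card_perm]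
  congr 1
  rw [Fintype.card_subtype]
  have : Finset.univ.filter (fun x : Fin n => x ∉ T) = Tᶜ := by ext x; simp
  rw [this, Finset.card_compl, Fintype.card_fin]

lemma sum_supersets {n : ℕ} (F : Finset (Fin n)) (φ : ℕ → ℤ) :
    ∑ S ∈ Finset.univ.filter (fun S : Finset (Fin n) => F ⊆ S), φ S.card
      = ∑ U ∈ Fᶜ.powerset, φ (F.card + U.card) := by
  apply Finset.sum_nbij' (i := fun S => S \ F) (j := fun U => F ∪ U)
  · intro S hS
    simp only [Finset.mem_filter] at hS
    rw [Finset.mem_powerset]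
    intro x hx
    rw [Finset.mem_compl]
    exact (Finset.mem_sdiff.mp hx).2
  · intro U hU
    simp only [Finset.mem_filter, Finset.mem_univ, true_and]
    exact Finset.subset_union_left
  · intro S hS
    simp only [Finset.mem_filter] at hS
    exact Finset.union_sdiff_of_subset hS.2
  · intro U hU
    rw [Finset.mem_powerset] at hU
    ext x
    simp only [Finset.mem_sdiff, Finset.mem_union]
    constructor
    · rintro ⟨h1 | h1, h2⟩
      · exact absurd h1 h2
      · exact h1
    · intro hx
      exact ⟨Or.inr hx, fun hF => (Finset.mem_compl.mp (hU hx)) hF⟩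
  · intro S hS
    simp only [Finset.mem_filter] at hS
    congr 1
    rw [Finset.card_sdiff_of_subset hS.2]
    have := Finset.card_le_card hS.2
    omega

lemma sum_supersets_one {n : ℕ} (F : Finset (Fin n)) :
    ∑ S ∈ Finset.univ.filter (fun S : Finset (Fin n) => F ⊆ S), (1 : ℤ)
      = 2 ^ (n - F.card) := by
  rw [show (1:ℤ) = (fun _ : ℕ => (1:ℤ)) F.card from rfl] -- dummy
  rw [sum_supersets F (fun _ => 1)]
  rw [Finset.sum_const, Finset.card_powerset, Finset.card_compl, Fintype.card_fin]
  simp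

lemma sum_supersets_sign {n : ℕ} (F : Finset (Fin n)) :
    ∑ S ∈ Finset.univ.filter (fun S : Finset (Fin n) => F ⊆ S), ((-1 : ℤ)) ^ S.card
      = if F = Finset.univ then (-1)^n else 0 := by
  rw [show (fun S : Finset (Fin n) => ((-1 : ℤ)) ^ S.card) = fun S => (fun c => ((-1:ℤ))^c) S.card from rfl]
  rw [sum_supersets F (fun c => (-1)^c)]
  simp_rw [pow_add]
  rw [← Finset.mul_sum, Finset.sum_powerset_neg_one_pow_card]
  by_cases h : F = Finset.univ
  · rw [if_pos h, if_pos (by rw [h]; simp), h]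
    rw [Finset.card_univ, Fintype.card_fin]
    ring
  · rw [if_neg h, if_neg (by
      intro hc
      apply h
      rwa [Finset.compl_eq_empty_iff] at hc), mul_zero]

lemma sval_one (n : ℕ) : sval (1 : Equiv.Perm (Fin n)) = 1 := by
  unfold sval
  rw [Equiv.Perm.signAux_one]
  rfl

lemma signsum_zero (n : ℕ) (T : Finset (Fin n)) (h2 : 2 ≤ n - T.card) :
    ∑ σ ∈ Finset.univ.filter (fun σ : Equiv.Perm (Fin n) => ∀ i ∈ T, σ i = i),
      sval σ = 0 := by
  have hcard : 1 < (Tᶜ : Finset (Fin n)).card := by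
    rw [Finset.card_compl, Fintype.card_fin]; omega
  obtain ⟨a, b, ha, hb, hab⟩ := Finset.one_lt_card_iff.mp hcard
  rw [Finset.mem_compl] at ha hb
  apply Finset.sum_involution (fun σ _ => σ * Equiv.swap a b)
  · intro σ _
    unfold sval
    rw [Equiv.Perm.signAux_mul, Equiv.Perm.signAux_swap hab]
    rcases Int.units_eq_one_or (Equiv.Perm.signAux σ) with h | h <;> rw [h] <;> rfl
  · intro σ _ _ heq
    have hsw : Equiv.swap a b = 1 := by
      have h1 : σ * Equiv.swap a b = σ * 1 := by rw [mul_one]; exact heq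
      exact mul_left_cancel h1
    have : Equiv.swap a b a = a := by rw [hsw]; rfl
    rw [Equiv.swap_apply_left] at this
    exact hab this.symm
  · intro σ hσ
    simp only [Finset.mem_filter, Finset.mem_univ, true_and] at hσ ⊢
    intro i hi
    have hia : i ≠ a := fun h => ha (h ▸ hi)
    have hib : i ≠ b := fun h => hb (h ▸ hi)
    rw [Equiv.Perm.mul_apply, Equiv.swap_apply_of_ne_of_ne hia hib]
    exact hσ i hi
  · intro σ _
    rw [mul_assoc, Equiv.swap_mul_self, mul_one]

lemma fix_eq_one {n : ℕ} (T : Finset (Fin n)) (h : n ≤ T.card + 1)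
    (σ : Equiv.Perm (Fin n)) (hσ : ∀ i ∈ T, σ i = i) : σ = 1 := by
  ext i
  simp only [Equiv.Perm.coe_one, id_eq]
  by_contra hne
  have hi : i ∉ T := fun h' => hne (congrArg Fin.val (hσ i h'))
  have hj : σ i ∉ T := by
    intro h'
    exact hne (congrArg Fin.val (σ.injective (hσ _ h')))
  have hij : σ i ≠ i := fun h => hne (congrArg Fin.val h)
  have hsub : T ⊆ (Finset.univ : Finset (Fin n)) \ {i, σ i} := by
    intro x hx
    rw [Finset.mem_sdiff]
    refine ⟨Finset.mem_univ _, ?_⟩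
    simp only [Finset.mem_insert, Finset.mem_singleton]
    rintro (rfl | rfl)
    · exact hi hx
    · exact hj hx
  have hcard := Finset.card_le_card hsub
  rw [Finset.card_sdiff_of_subset (by simp)] at hcard
  rw [Finset.card_pair hij.symm] at hcard
  simp only [Finset.card_univ, Fintype.card_fin] at hcard
  omega

lemma signsum_val (n : ℕ) (T : Finset (Fin n)) :
    ∑ σ ∈ Finset.univ.filter (fun σ : Equiv.Perm (Fin n) => ∀ i ∈ T, σ i = i),
      sval σ = if n ≤ T.card + 1 then 1 else 0 := by
  by_cases h : n ≤ T.card + 1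
  · rw [if_pos h]
    have : Finset.univ.filter (fun σ : Equiv.Perm (Fin n) => ∀ i ∈ T, σ i = i) = {1} := by
      ext σ
      simp only [Finset.mem_filter, Finset.mem_univ, true_and, Finset.mem_singleton]
      constructor
      · exact fix_eq_one T h σ
      · rintro rfl i _; rfl
    rw [this, Finset.sum_singleton, sval_one]
  · rw [if_neg h]
    exact signsum_zero n T (by have := Finset.card_le_univ T; simp at this; omega)

def Fixs {n : ℕ} (σ : Equiv.Perm (Fin n)) : Finset (Fin n) :=
  Finset.univ.filter fun i => σ i = i

def base (n : ℕ) : Finset (Equiv.Perm (Fin n) × Finset (Fin n)) :=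
  Finset.univ.filter fun p => ∀ i, p.1 i = i → i ∈ p.2

lemma prod_ind {n : ℕ} (σ : Equiv.Perm (Fin n)) (T : Finset (Fin n)) :
    (∏ i ∈ T, if σ i = i then (-1 : ℤ) else 0)
      = if (∀ i ∈ T, σ i = i) then (-1)^T.card else 0 := by
  by_cases h : ∀ i ∈ T, σ i = i
  · rw [if_pos h]
    rw [Finset.prod_congr rfl (fun i hi => if_pos (h i hi))]
    simp
  · rw [if_neg h]
    push_neg at h
    obtain ⟨i, hi, hne⟩ := h
    exact Finset.prod_eq_zero hi (if_neg hne)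

lemma pow_two_prod {n : ℕ} (σ : Equiv.Perm (Fin n)) :
    (2:ℤ) ^ (n - (Fixs σ).card) = ∏ i : Fin n, (if σ i = i then (1:ℤ) else 2) := by
  rw [Finset.prod_ite (fun _ => (1:ℤ)) (fun _ => (2:ℤ))]
  rw [Finset.prod_const, Finset.prod_const, one_pow, one_mul]
  congr 1
  unfold Fixs
  rw [Finset.filter_not, Finset.card_sdiff_of_subset (Finset.filter_subset _ _)]
  simp

lemma sum_perm_weight (n : ℕ) (c : Equiv.Perm (Fin n) → ℤ) :
    ∑ σ : Equiv.Perm (Fin n), c σ * 2 ^ (n - (Fixs σ).card)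
      = ∑ T ∈ (Finset.univ : Finset (Fin n)).powerset,
          (-1)^T.card * 2^(n - T.card) *
            (∑ σ ∈ Finset.univ.filter (fun σ : Equiv.Perm (Fin n) => ∀ i ∈ T, σ i = i), c σ) := by
  have step1 : ∀ σ : Equiv.Perm (Fin n), c σ * 2 ^ (n - (Fixs σ).card)
      = ∑ T ∈ (Finset.univ : Finset (Fin n)).powerset,
          (if (∀ i ∈ T, σ i = i) then (-1:ℤ)^T.card else 0) * 2^(n - T.card) * c σ := by
    intro σ
    rw [pow_two_prod σ]
    have : ∀ i : Fin n, (if σ i = i then (1:ℤ) else 2)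
        = (if σ i = i then (-1:ℤ) else 0) + 2 := by
      intro i; split <;> ring
    rw [Finset.prod_congr rfl (fun i _ => this i), Finset.prod_add]
    rw [Finset.mul_sum]
    apply Finset.sum_congr rfl
    intro T hT
    rw [prod_ind, Finset.prod_const]
    have hTc : (Finset.univ \ T).card = n - T.card := by
      rw [Finset.card_sdiff_of_subset (Finset.mem_powerset.mp hT)]
      simp
    rw [hTc]
    ring
  rw [Finset.sum_congr rfl (fun σ _ => step1 σ), Finset.sum_comm]
  apply Finset.sum_congr rfl
  intro T _
  rw [Finset.mul_sum, ← Finset.sum_filter_add_sum_filter_not Finset.univ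
    (fun σ : Equiv.Perm (Fin n) => ∀ i ∈ T, σ i = i)]
  have h2 : ∑ σ ∈ Finset.univ.filter (fun σ : Equiv.Perm (Fin n) => ¬ ∀ i ∈ T, σ i = i),
      (if (∀ i ∈ T, σ i = i) then (-1:ℤ)^T.card else 0) * 2^(n - T.card) * c σ = 0 := by
    apply Finset.sum_eq_zero
    intro σ hσ
    rw [Finset.mem_filter] at hσ
    rw [if_neg hσ.2]
    ring
  rw [h2, add_zero]
  apply Finset.sum_congr rfl
  intro σ hσ
  rw [Finset.mem_filter] at hσ
  rw [if_pos hσ.2]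

lemma term_eq (n m : ℕ) (hm : m ≤ n) :
    (n.choose m : ℤ) * ((-1)^m * ((Nat.factorial (n-m) : ℕ) : ℤ) * 2^(n-m))
      = (-1:ℤ)^n * ((-2)^(n-m) * ((n.descFactorial (n-m) : ℕ) : ℤ)) := by
  rw [Nat.descFactorial_eq_factorial_mul_choose, Nat.choose_symm hm]
  rw [show ((-2:ℤ))^(n-m) = (-1)^(n-m) * 2^(n-m) by rw [← neg_one_mul, mul_pow]]
  have hsign : (-1:ℤ)^n * (-1)^(n-m) = (-1)^m := by
    rw [← pow_add]
    rw [show n + (n - m) = m + 2*(n-m) by omega]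
    rw [pow_add, pow_mul]
    simp
  push_cast
  rw [show ((-1:ℤ)^m) = (-1:ℤ)^n * (-1)^(n-m) from hsign.symm]
  ring

lemma q1 (n : ℕ) :
    ∑ σ : Equiv.Perm (Fin n), (1:ℤ) * 2 ^ (n - (Fixs σ).card) = (-1)^n * Rf n := by
  rw [sum_perm_weight n (fun _ => 1)]
  have hin : ∀ T ∈ (Finset.univ : Finset (Fin n)).powerset,
      (-1:ℤ)^T.card * 2^(n - T.card) *
        (∑ σ ∈ Finset.univ.filter (fun σ : Equiv.Perm (Fin n) => ∀ i ∈ T, σ i = i), (1:ℤ))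
      = (fun m => (-1:ℤ)^m * ((Nat.factorial (n-m) : ℕ) : ℤ) * 2^(n-m)) T.card := by
    intro T _
    rw [Finset.sum_const, card_fixing n T]
    simp only [nsmul_eq_mul, mul_one]
    ring
  rw [Finset.sum_congr rfl hin, Finset.sum_powerset_apply_card
    (fun m => (-1:ℤ)^m * ((Nat.factorial (n-m) : ℕ) : ℤ) * 2^(n-m))]
  simp only [Finset.card_univ, Fintype.card_fin, nsmul_eq_mul]
  rw [Finset.sum_congr rfl (fun m hm => term_eq n m (by
    rw [Finset.mem_range] at hm; omega))]
  rw [← Finset.mul_sum]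
  congr 1
  unfold Rf
  rw [← Finset.sum_range_reflect (fun j => (-2:ℤ)^j * ((n.descFactorial j : ℕ) : ℤ)) (n+1)]
  apply Finset.sum_congr rfl
  intro m hm
  rw [Finset.mem_range] at hm
  congr 2 <;> omega

lemma q2 (k : ℕ) :
    ∑ σ : Equiv.Perm (Fin (k+1)), sval σ * 2 ^ ((k+1) - (Fixs σ).card)
      = 2*((k:ℤ)+1)*(-1)^k + (-1)^(k+1) := by
  rw [sum_perm_weight (k+1) sval]
  have hin : ∀ T ∈ (Finset.univ : Finset (Fin (k+1))).powerset,
      (-1:ℤ)^T.card * 2^((k+1) - T.card) *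
        (∑ σ ∈ Finset.univ.filter (fun σ : Equiv.Perm (Fin (k+1)) => ∀ i ∈ T, σ i = i), sval σ)
      = (fun m => (-1:ℤ)^m * 2^((k+1)-m) * (if (k+1) ≤ m+1 then (1:ℤ) else 0)) T.card := by
    intro T _
    rw [signsum_val (k+1) T]
  rw [Finset.sum_congr rfl hin, Finset.sum_powerset_apply_card
    (fun m => (-1:ℤ)^m * 2^((k+1)-m) * (if (k+1) ≤ m+1 then (1:ℤ) else 0))]
  simp only [Finset.card_univ, Fintype.card_fin, nsmul_eq_mul]
  rw [Finset.sum_range_succ, Finset.sum_range_succ]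
  have hzero : ∀ m ∈ Finset.range k,
      ((k+1).choose m : ℤ) * ((-1:ℤ)^m * 2^((k+1)-m) * (if (k+1) ≤ m+1 then (1:ℤ) else 0)) = 0 := by
    intro m hm
    rw [Finset.mem_range] at hm
    rw [if_neg (by omega)]
    ring
  rw [Finset.sum_eq_zero hzero, zero_add]
  rw [if_pos (by omega), if_pos (by omega)]
  rw [Nat.choose_succ_self_right, Nat.choose_self]
  rw [show (k+1) - k = 1 by omega, show (k+1) - (k+1) = 0 by omega]
  push_cast
  ring

lemma base_sum (n : ℕ) (f : Equiv.Perm (Fin n) × Finset (Fin n) → ℤ) :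
    ∑ p ∈ base n, f p
      = ∑ σ : Equiv.Perm (Fin n),
          ∑ S ∈ Finset.univ.filter (fun S : Finset (Fin n) => Fixs σ ⊆ S), f (σ, S) := by
  unfold base
  rw [Finset.sum_filter, Fintype.sum_prod_type]
  apply Finset.sum_congr rfl
  intro σ _
  rw [Finset.sum_filter]
  apply Finset.sum_congr rfl
  intro S _
  apply if_congr _ rfl rfl
  constructor
  · intro h x hx
    simp only [Fixs, Finset.mem_filter] at hx
    exact h x hx.2
  · intro h i hi
    exact h (by simp [Fixs, hi])

lemma fixs_univ_iff {n : ℕ} (σ : Equiv.Perm (Fin n)) :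
    Fixs σ = Finset.univ ↔ σ = 1 := by
  constructor
  · intro h
    apply Equiv.ext
    intro i
    have : i ∈ Fixs σ := h ▸ Finset.mem_univ i
    simpa [Fixs, Equiv.Perm.one_apply] using this
  · rintro rfl
    ext i
    simp [Fixs]

lemma q3 (n : ℕ) :
    ∑ σ : Equiv.Perm (Fin n), (if Fixs σ = Finset.univ then (-1:ℤ)^n else 0) = (-1)^n := by
  rw [Finset.sum_congr rfl (fun σ _ => if_congr (fixs_univ_iff σ) rfl rfl)]
  rw [Finset.sum_ite_eq' Finset.univ 1 (fun _ => (-1:ℤ)^n)]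
  simp

lemma q4 (n : ℕ) :
    ∑ σ : Equiv.Perm (Fin n), sval σ * (if Fixs σ = Finset.univ then (-1:ℤ)^n else 0)
      = (-1)^n := by
  have hpt : ∀ σ : Equiv.Perm (Fin n),
      sval σ * (if Fixs σ = Finset.univ then (-1:ℤ)^n else 0)
        = if σ = 1 then sval σ * (-1)^n else 0 := by
    intro σ
    rw [if_congr (fixs_univ_iff σ) rfl rfl]
    split <;> ring
  rw [Finset.sum_congr rfl (fun σ _ => hpt σ)]
  rw [Finset.sum_ite_eq' Finset.univ 1 (fun σ => sval σ * (-1:ℤ)^n)]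
  simp [sval_one]

lemma hbase (n : ℕ) :
    (4:ℤ) * ((goodPairs n).card : ℤ)
      = ∑ p ∈ base n, (1 + sval p.1) * (1 + (-1:ℤ)^p.2.card) := by
  have hpt : ∀ p ∈ base n, (1 + sval p.1) * (1 + (-1:ℤ)^p.2.card)
      = if (Equiv.Perm.signAux p.1 = 1 ∧ Even p.2.card) then 4 else 0 := by
    intro p _
    unfold sval
    rcases Int.units_eq_one_or (Equiv.Perm.signAux p.1) with h | h <;> rw [h] <;>
      by_cases he : Even p.2.card
    · rw [if_pos ⟨rfl, he⟩, he.neg_one_pow]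
      norm_num
    · rw [if_neg (fun hc => he hc.2), (Nat.not_even_iff_odd.mp he).neg_one_pow]
      norm_num
    · rw [if_neg (fun hc => absurd hc.1 (by decide))]
      norm_num
    · rw [if_neg (fun hc => absurd hc.1 (by decide))]
      norm_num
  rw [Finset.sum_congr rfl hpt, Finset.sum_ite, Finset.sum_const, Finset.sum_const_zero, add_zero]
  have hgp : (base n).filter
      (fun p : Equiv.Perm (Fin n) × Finset (Fin n) =>
        Equiv.Perm.signAux p.1 = 1 ∧ Even p.2.card) = goodPairs n := by
    unfold base goodPairs
    rw [Finset.filter_filter]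
    apply Finset.filter_congr
    intro p _
    tauto
  rw [hgp, nsmul_eq_mul]
  ring

lemma claimB (k : ℕ) :
    (4:ℤ) * ((goodPairs (k+1)).card : ℤ)
      = (-1)^(k+1) * Rf (k+1) + 2*((k:ℤ)+1)*(-1)^k + 3*(-1)^(k+1) := by
  rw [hbase]
  have hsplit : ∑ p ∈ base (k+1), (1 + sval p.1) * (1 + (-1:ℤ)^p.2.card)
      = (∑ p ∈ base (k+1), (1:ℤ)) + (∑ p ∈ base (k+1), sval p.1)
        + (∑ p ∈ base (k+1), (-1:ℤ)^p.2.card)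
        + (∑ p ∈ base (k+1), sval p.1 * (-1:ℤ)^p.2.card) := by
    rw [← Finset.sum_add_distrib, ← Finset.sum_add_distrib, ← Finset.sum_add_distrib]
    apply Finset.sum_congr rfl
    intro p _
    ring
  rw [hsplit]
  have hcard : ∀ σ : Equiv.Perm (Fin (k+1)),
      ((Finset.univ.filter (fun S : Finset (Fin (k+1)) => Fixs σ ⊆ S)).card : ℤ)
        = 2 ^ ((k+1) - (Fixs σ).card) := by
    intro σ
    have := sum_supersets_one (Fixs σ)
    rwa [Finset.sum_const, nsmul_eq_mul, mul_one] at this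
  have h1 : (∑ p ∈ base (k+1), (1:ℤ)) = (-1:ℤ)^(k+1) * Rf (k+1) := by
    rw [base_sum (k+1) (fun _ => 1)]
    rw [Finset.sum_congr rfl (fun σ _ => sum_supersets_one (Fixs σ))]
    have := q1 (k+1)
    simpa using this
  have h2 : (∑ p ∈ base (k+1), sval p.1) = 2*((k:ℤ)+1)*(-1)^k + (-1)^(k+1) := by
    rw [base_sum (k+1) (fun p => sval p.1)]
    rw [← q2 k]
    apply Finset.sum_congr rfl
    intro σ _
    show (∑ _S ∈ Finset.univ.filter (fun S : Finset (Fin (k+1)) => Fixs σ ⊆ S), sval σ) = _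
    rw [Finset.sum_const, nsmul_eq_mul, hcard σ]
    ring
  have h3 : (∑ p ∈ base (k+1), (-1:ℤ)^p.2.card) = (-1:ℤ)^(k+1) := by
    rw [base_sum (k+1) (fun p => (-1:ℤ)^p.2.card)]
    rw [Finset.sum_congr rfl (fun σ _ => sum_supersets_sign (Fixs σ))]
    exact q3 (k+1)
  have h4 : (∑ p ∈ base (k+1), sval p.1 * (-1:ℤ)^p.2.card) = (-1:ℤ)^(k+1) := by
    have inner : ∀ σ : Equiv.Perm (Fin (k+1)),
        (∑ S ∈ Finset.univ.filter (fun S : Finset (Fin (k+1)) => Fixs σ ⊆ S),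
          sval (σ, S).1 * (-1:ℤ)^(σ, S).2.card)
        = sval σ * (if Fixs σ = Finset.univ then (-1:ℤ)^(k+1) else 0) := by
      intro σ
      show (∑ S ∈ Finset.univ.filter (fun S : Finset (Fin (k+1)) => Fixs σ ⊆ S),
          sval σ * (-1:ℤ)^S.card) = _
      rw [← Finset.mul_sum, sum_supersets_sign (Fixs σ)]
    rw [base_sum (k+1) (fun p => sval p.1 * (-1:ℤ)^p.2.card)]
    rw [Finset.sum_congr rfl (fun σ _ => inner σ)]
    exact q4 (k+1)
  rw [h1, h2, h3, h4]
  ring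

lemma masterD (k : ℕ) :
    (4:ℤ) * (dAD (k+1) : ℤ)
      = (-1)^(k+1) * Rf (k+1) + 2*((k:ℤ)+1)*(-1)^k + 3*(-1)^(k+1) := by
  rw [dAD_eq_card]
  exact claimB k

lemma Rf_one : Rf 1 = -1 := by
  rw [show (1:ℕ) = 0 + 1 from rfl, Rf_succ, Rf_zero]
  norm_num

lemma Rf_two : Rf 2 = 5 := by
  rw [show (2:ℕ) = 1 + 1 from rfl, Rf_succ, Rf_one]
  norm_num

theorem stmt16 :
    dAD 1 = 0 ∧ dAD 2 = 1 ∧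
    ∀ n : ℕ, 3 ≤ n →
      (dAD n : ℤ) = (2 * (n : ℤ) - 1) * (dAD (n - 1) : ℤ) +
        2 * ((n : ℤ) - 1) * (dAD (n - 2) : ℤ) + (-1 : ℤ) ^ (n - 1) * (2 * (n : ℤ) - 3) := by
  refine ⟨?_, ?_, ?_⟩
  · have h := masterD 0
    rw [show (0:ℕ)+1 = 1 from rfl, Rf_one] at h
    norm_num at h
    exact h
  · have h := masterD 1
    rw [show (1:ℕ)+1 = 2 from rfl, Rf_two] at h
    norm_num at h
    omega
  · intro n hn
    obtain ⟨m, rfl⟩ : ∃ m, n = m + 3 := ⟨n - 3, by omega⟩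
    have h3 := masterD (m+2)
    have h2 := masterD (m+1)
    have h1 := masterD m
    have hr3 := Rf_succ (m+2)
    have hr2 := Rf_succ (m+1)
    simp only [show m+3-1 = m+2 by omega, show m+3-2 = m+1 by omega]
    apply mul_left_cancel₀ (show (4:ℤ) ≠ 0 by norm_num)
    push_cast at h3 h2 h1 hr3 hr2 ⊢
    linear_combination h3 - (2*(m:ℤ)+5) * h2 - (2*(m:ℤ)+4) * h1
      + (-1:ℤ)^(m+3) * hr3 + (-1:ℤ)^(m+2) * hr2
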